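/- For m ≥ 2, λ = 1 is a root of φ_m(λ) = ∏_{i=1}^{m-1}(λ+i) - m!, and all roots of φ_m are simple. -/

import Mathlib

open Polynomial

/-- The characteristic polynomial `φ_m(λ) = ∏_{i=1}^{m-1}(λ+i) - m!` of the
`m`-ary search tree urn matrix, as a polynomial over `ℂ`. -/
noncomputable def phi (m : ℕ) : Polynomial ℂ :=
  (∏ i ∈ Finset.range (m - 1), (X + C ((i : ℂ) + 1))) - C ((m.factorial : ℂ))

lemma prod_nat (n : ℕ) : ∏ i ∈ Finset.range n, (i + 2) = (n+1).factorial := by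
  induction n with
  | zero => simp
  | succ n ih => rw [Finset.prod_range_succ, ih]; rw [show n+1+1 = (n+2) from rfl, Nat.factorial_succ (n+1)]; ring

lemma phi_eval_one (m : ℕ) (hm : 2 ≤ m) : (phi m).eval 1 = 0 := by
  have h := prod_nat (m - 1)
  have hm1 : m - 1 + 1 = m := by omega
  rw [hm1] at h
  simp only [phi, eval_sub, eval_prod, eval_add, eval_X, eval_C, eval_C]
  have : ∏ i ∈ Finset.range (m-1), ((1:ℂ) + ((i:ℂ)+1)) = ((m.factorial : ℕ) : ℂ) := by
    rw [← h]
    push_cast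
    apply Finset.prod_congr rfl
    intro i _
    ring
  rw [this]; ring

lemma deriv_prod (s : Finset ℕ) (f : ℕ → Polynomial ℂ) :
    Polynomial.derivative (∏ i ∈ s, f i)
      = ∑ i ∈ s, (∏ j ∈ s.erase i, f j) * Polynomial.derivative (f i) := by
  classical
  rw [Finset.prod_eq_multiset_prod, Polynomial.derivative_prod, Finset.sum_eq_multiset_sum]
  refine congrArg Multiset.sum (Multiset.map_congr rfl fun j hj => ?_)
  rw [Finset.prod_eq_multiset_prod, Finset.erase_val]

lemma prod_sub_eq_factorial (n : ℕ) : ∏ j ∈ Finset.range n, (n - j) = n.factorial := by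
  rw [← Finset.prod_range_reflect (fun j => n - j) n, ← Finset.prod_range_add_one_eq_factorial n]
  apply Finset.prod_congr rfl
  intro j hj
  simp only [Finset.mem_range] at hj
  omega

lemma phi_mult_aux (m : ℕ) (hm : 2 ≤ m) (z : ℂ) (h : 2 ≤ (phi m).rootMultiplicity z) : False := by
  have hφ0 : phi m ≠ 0 := by
    intro h0; rw [h0, rootMultiplicity_zero] at h; omega
  obtain ⟨q, hq⟩ := (Polynomial.le_rootMultiplicity_iff hφ0).mp h
  have hroot : (phi m).eval z = 0 := by simp [hq]
  have hder : (phi m).derivative.eval z = 0 := by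
    rw [hq]; simp [pow_two]
  -- product equation
  have hP : ∏ j ∈ Finset.range (m-1), (z + ((j:ℂ)+1)) = (m.factorial : ℂ) := by
    have := hroot
    simp only [phi, eval_sub, eval_prod, eval_add, eval_X, eval_C, sub_eq_zero] at this
    exact this
  have hfac0 : (m.factorial : ℂ) ≠ 0 := Nat.cast_ne_zero.mpr (Nat.factorial_ne_zero m)
  have hne : ∀ j ∈ Finset.range (m-1), z + ((j:ℂ)+1) ≠ 0 := by
    intro j hj hzero
    exact hfac0 (by rw [← hP, Finset.prod_eq_zero hj hzero])
  -- sum of inverses is zero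
  have hS : ∑ j ∈ Finset.range (m-1), (z + ((j:ℂ)+1))⁻¹ = 0 := by
    have hd : (phi m).derivative = Polynomial.derivative
        (∏ i ∈ Finset.range (m - 1), (X + C ((i : ℂ) + 1))) := by
      simp [phi]
    rw [hd, deriv_prod] at hder
    simp only [eval_finset_sum, eval_mul, eval_prod, eval_add, eval_X, eval_C,
      Polynomial.derivative_add, Polynomial.derivative_X, Polynomial.derivative_C,
      add_zero, eval_one, mul_one] at hder
    have key : ∀ j ∈ Finset.range (m-1),
        ∏ i ∈ (Finset.range (m-1)).erase j, (z + ((i:ℂ)+1))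
        = (m.factorial : ℂ) * (z + ((j:ℂ)+1))⁻¹ := by
      intro j hj
      have h2 := Finset.prod_erase_mul (Finset.range (m-1)) (fun i => z + ((i:ℂ)+1)) hj
      rw [hP] at h2
      rw [eq_mul_inv_iff_mul_eq₀ (hne j hj)]
      exact h2
    rw [Finset.sum_congr rfl key, ← Finset.mul_sum] at hder
    exact (mul_eq_zero.mp hder).resolve_left hfac0
  -- z is real
  have hnsq : ∀ j ∈ Finset.range (m-1), 0 < Complex.normSq (z + ((j:ℂ)+1)) := by
    intro j hj
    exact Complex.normSq_pos.mpr (hne j hj)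
  have hmne : m - 1 ≠ 0 := by omega
  have hnonempty : (Finset.range (m-1)).Nonempty := by
    rw [Finset.nonempty_range_iff]; exact hmne
  have him : z.im = 0 := by
    have h1 : (∑ j ∈ Finset.range (m-1), (z + ((j:ℂ)+1))⁻¹).im = 0 := by rw [hS]; rfl
    rw [Complex.im_sum] at h1
    have h2 : ∑ j ∈ Finset.range (m-1), (-z.im / Complex.normSq (z + ((j:ℂ)+1))) = 0 := by
      rw [← h1]
      apply Finset.sum_congr rfl
      intro j hj
      rw [Complex.inv_im]
      congr 1
      simp
    by_contra hzim
    rcases lt_or_gt_of_ne hzim with hlt | hgt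
    · have : ∀ j ∈ Finset.range (m-1), 0 < -z.im / Complex.normSq (z + ((j:ℂ)+1)) := by
        intro j hj; exact div_pos (by linarith) (hnsq j hj)
      have := Finset.sum_pos this hnonempty
      linarith [h2 ▸ this]
    · have : ∀ j ∈ Finset.range (m-1), -z.im / Complex.normSq (z + ((j:ℂ)+1)) < 0 := by
        intro j hj; exact div_neg_of_neg_of_pos (by linarith) (hnsq j hj)
      have := Finset.sum_neg this hnonempty
      linarith [h2 ▸ this]
  set x : ℝ := z.re with hx
  have hz : z = (x:ℂ) := Complex.ext rfl him
  -- real versions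
  have hPr : ∏ j ∈ Finset.range (m-1), (x + (j:ℝ) + 1) = (m.factorial : ℝ) := by
    have : ((∏ j ∈ Finset.range (m-1), (x + (j:ℝ) + 1) : ℝ) : ℂ) = ((m.factorial : ℝ) : ℂ) := by
      push_cast
      rw [← hP, hz]
      apply Finset.prod_congr rfl
      intro j hj; push_cast; ring
    exact_mod_cast this
  have hSr : ∑ j ∈ Finset.range (m-1), (x + (j:ℝ) + 1)⁻¹ = 0 := by
    have : ((∑ j ∈ Finset.range (m-1), (x + (j:ℝ) + 1)⁻¹ : ℝ) : ℂ) = ((0:ℝ) : ℂ) := by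
      push_cast
      rw [← hS, hz]
      apply Finset.sum_congr rfl
      intro j hj; push_cast; ring_nf
    exact_mod_cast this
  have hner : ∀ j ∈ Finset.range (m-1), x + (j:ℝ) + 1 ≠ 0 := by
    intro j hj hc
    apply hne j hj
    rw [hz]
    have hcc : ((x + (j:ℝ) + 1 : ℝ) : ℂ) = 0 := by rw [hc]; norm_num
    push_cast at hcc
    linear_combination hcc
  -- there is a negative and a positive factor
  have hnegex : ∃ j ∈ Finset.range (m-1), x + (j:ℝ) + 1 < 0 := by
    by_contra hco
    push_neg at hco
    have hpos : ∀ j ∈ Finset.range (m-1), 0 < (x + (j:ℝ) + 1)⁻¹ := by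
      intro j hj
      exact inv_pos.mpr (lt_of_le_of_ne (hco j hj) (Ne.symm (hner j hj)))
    have := Finset.sum_pos hpos hnonempty
    linarith [hSr ▸ this]
  have hposex : ∃ j ∈ Finset.range (m-1), 0 < x + (j:ℝ) + 1 := by
    by_contra hco
    push_neg at hco
    have hneg' : ∀ j ∈ Finset.range (m-1), (x + (j:ℝ) + 1)⁻¹ < 0 := by
      intro j hj
      exact inv_lt_zero.mpr (lt_of_le_of_ne (hco j hj) (hner j hj))
    have := Finset.sum_neg hneg' hnonempty
    linarith [hSr ▸ this]
  obtain ⟨j₁, hj₁, hj₁neg⟩ := hnegex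
  obtain ⟨j₂, hj₂, hj₂pos⟩ := hposex
  simp only [Finset.mem_range] at hj₁ hj₂
  have hx1 : x + 1 < 0 := by
    have : (0:ℝ) ≤ j₁ := Nat.cast_nonneg j₁
    linarith
  have hxm : 0 < x + (m-1 : ℕ) := by
    have : (j₂:ℝ) ≤ ((m-1:ℕ):ℝ) - 1 := by
      have : (j₂:ℝ) + 1 ≤ ((m-1:ℕ):ℝ) := by exact_mod_cast Nat.succ_le_of_lt hj₂
      linarith
    linarith
  -- the integer part
  set n : ℕ := (⌊-x⌋).toNat with hn
  have hfl : (⌊-x⌋ : ℝ) ≤ -x := Int.floor_le _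
  have hfl2 : -x < ⌊-x⌋ + 1 := Int.lt_floor_add_one _
  have h1n : 1 ≤ ⌊-x⌋ := by
    apply Int.le_floor.mpr; push_cast; linarith
  have hnn : (n:ℝ) = (⌊-x⌋ : ℝ) := by
    have h0 : (0:ℤ) ≤ ⌊-x⌋ := by omega
    rw [hn]
    exact_mod_cast congrArg (fun t : ℤ => (t:ℝ)) (Int.toNat_of_nonneg h0)
  have hnne : (n:ℝ) ≠ -x := by
    intro hc
    apply hner (n-1) ?_ ?_
    · rw [Finset.mem_range]
      have : (n:ℝ) < ((m-1:ℕ):ℝ) := by rw [hc]; linarith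
      have hnm : n < m - 1 := by exact_mod_cast this
      omega
    · have hn1 : 1 ≤ n := by
        have : (1:ℝ) ≤ (n:ℝ) := by rw [hnn]; exact_mod_cast h1n
        exact_mod_cast this
      have : ((n-1:ℕ):ℝ) = (n:ℝ) - 1 := by push_cast [hn1]; ring
      rw [this, hc]; ring
  have hnlt : (n:ℝ) < -x := lt_of_le_of_ne (hnn ▸ hfl) hnne
  have hnlt2 : -x < (n:ℝ) + 1 := by rw [hnn]; exact_mod_cast hfl2
  have hn1 : 1 ≤ n := by
    have : (1:ℝ) ≤ (n:ℝ) := by rw [hnn]; exact_mod_cast h1n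
    exact_mod_cast this
  set k : ℕ := n - 1 with hk
  have hkn : n = k + 1 := by omega
  have hxlo : -((k:ℝ) + 2) < x := by
    have : (n:ℝ) = (k:ℝ) + 1 := by rw [hkn]; push_cast; ring
    linarith [hnlt2, this]
  have hxhi : x < -((k:ℝ) + 1) := by
    have : (n:ℝ) = (k:ℝ) + 1 := by rw [hkn]; push_cast; ring
    linarith [hnlt, this]
  have hkm : k + 2 ≤ m - 1 := by
    -- since x + (m-1) > 0 and x < -(k+1): k+1 < m-1
    have h1 : ((k:ℝ)+1) < ((m-1:ℕ):ℝ) := by linarith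
    have : k + 1 < m - 1 := by exact_mod_cast h1
    omega
  -- the bounding product
  set B : ℕ → ℝ := fun j => if j ≤ k then ((k + 1 - j : ℕ) : ℝ) else ((j - k : ℕ) : ℝ) with hB
  have habs : ∀ j ∈ Finset.range (m-1), |x + (j:ℝ) + 1| < B j := by
    intro j hj
    simp only [hB]
    by_cases hjk : j ≤ k
    · rw [if_pos hjk]
      have hjr : (j:ℝ) ≤ (k:ℝ) := by exact_mod_cast hjk
      have hc : ((k + 1 - j : ℕ) : ℝ) = (k:ℝ) + 1 - j := by
        have hle : j ≤ k + 1 := by omega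
        push_cast [hle]; ring
      rw [hc, abs_of_neg (by linarith)]
      linarith
    · push_neg at hjk
      rw [if_neg (Nat.not_le.mpr hjk)]
      have hjr : (k:ℝ) + 1 ≤ (j:ℝ) := by exact_mod_cast hjk
      have hcj : ((j - k : ℕ) : ℝ) = (j:ℝ) - k := by
        have hle : k ≤ j := by omega
        push_cast [hle]; ring
      rw [hcj, abs_of_pos (by linarith)]
      linarith
  have habs_pos : ∀ j ∈ Finset.range (m-1), 0 < |x + (j:ℝ) + 1| := by
    intro j hj; exact abs_pos.mpr (hner j hj)
  have hprodlt : ∏ j ∈ Finset.range (m-1), |x + (j:ℝ) + 1| < ∏ j ∈ Finset.range (m-1), B j :=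
    Finset.prod_lt_prod_of_nonempty habs_pos habs hnonempty
  -- compute LHS = m!
  have hlhs : ∏ j ∈ Finset.range (m-1), |x + (j:ℝ) + 1| = (m.factorial : ℝ) := by
    rw [← Finset.abs_prod, hPr, abs_of_pos (by exact_mod_cast Nat.factorial_pos m)]
  -- compute RHS
  have hrhs : ∏ j ∈ Finset.range (m-1), B j
      = (((k+1).factorial * (m - 2 - k).factorial : ℕ) : ℝ) := by
    rw [Finset.range_eq_Ico, ← Finset.prod_Ico_consecutive _ (Nat.zero_le (k+1)) (by omega :
      k + 1 ≤ m - 1)]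
    have h1 : ∏ j ∈ Finset.Ico 0 (k+1), B j = (((k+1).factorial : ℕ) : ℝ) := by
      rw [← Finset.range_eq_Ico]
      have : ∀ j ∈ Finset.range (k+1), B j = ((k + 1 - j : ℕ) : ℝ) := by
        intro j hj
        simp only [Finset.mem_range] at hj
        simp only [hB]
        rw [if_pos (by omega)]
      rw [Finset.prod_congr rfl this, ← Nat.cast_prod, prod_sub_eq_factorial (k+1)]
    have h2 : ∏ j ∈ Finset.Ico (k+1) (m-1), B j = (((m-2-k).factorial : ℕ) : ℝ) := by
      rw [Finset.prod_Ico_eq_prod_range]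
      have : ∀ j ∈ Finset.range (m - 1 - (k+1)), B (k + 1 + j) = ((j + 1 : ℕ) : ℝ) := by
        intro j hj
        simp only [hB]
        rw [if_neg (by omega)]
        congr 1
        omega
      rw [Finset.prod_congr rfl this, ← Nat.cast_prod, Finset.prod_range_add_one_eq_factorial]
      congr 2
      omega
    rw [h1, h2]
    push_cast
    ring
  -- final contradiction
  have hle : (k+1).factorial * (m - 2 - k).factorial ≤ (m-1).factorial := by
    have hd := Nat.factorial_mul_factorial_dvd_factorial_add (k+1) (m-2-k)
    have he : k + 1 + (m - 2 - k) = m - 1 := by omega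
    rw [he] at hd
    exact Nat.le_of_dvd (Nat.factorial_pos _) hd
  have hlt2 : (m-1).factorial < m.factorial := by
    have := (Nat.factorial_lt (show 0 < m - 1 by omega)).mpr (show m - 1 < m by omega)
    exact this
  have : (m.factorial : ℝ) < (m.factorial : ℝ) := by
    calc (m.factorial : ℝ) = ∏ j ∈ Finset.range (m-1), |x + (j:ℝ) + 1| := hlhs.symm
      _ < ∏ j ∈ Finset.range (m-1), B j := hprodlt
      _ = (((k+1).factorial * (m - 2 - k).factorial : ℕ) : ℝ) := hrhs
      _ ≤ (((m-1).factorial : ℕ) : ℝ) := by exact_mod_cast hle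
      _ ≤ (m.factorial : ℝ) := by exact_mod_cast hlt2.le
  linarith

/-- `λ = 1` is a root of `φ_m`, and all roots of `φ_m` are simple. -/
theorem phi_root_one_and_simple_roots (m : ℕ) (hm : 2 ≤ m) :
    (phi m).eval 1 = 0 ∧ ∀ z : ℂ, (phi m).rootMultiplicity z ≤ 1 := by
  refine ⟨phi_eval_one m hm, fun z => ?_⟩
  by_contra hcon
  push_neg at hcon
  exact phi_mult_aux m hm z (by omega)
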